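/- Let n ≥ 1, let a ∈ (Fin n → ZMod 2) with a ≠ 0, and let f : (Fin n → ZMod 2) → (Fin n → ZMod 2) satisfy the Simon promise: for all x, y, f(x) = f(y) if and only if y = x or y = x + a. For each u ∈ (Fin n → ZMod 2), define P(u) = Σ_z |2^{−n} · Σ_{x : f(x) = z} (−1)^{⟨u,x⟩}|², where the outer sum is over all z ∈ (Fin n → ZMod 2), ⟨u,x⟩ = Σ_i u_i·x_i ∈ ZMod 2, and (−1)^b denotes 1 if b = 0 and −1 if b = 1. Then P(u) = 2^{−(n−1)} if ⟨u,a⟩ = 0, and P(u) = 0 if ⟨u,a⟩ = 1. -/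

import Mathlib

/-- `(−1)^b` for `b : ZMod 2`, as a complex number. -/
noncomputable def negOnePow (b : ZMod 2) : ℂ := if b = 0 then 1 else -1

/-- Mod-2 inner product of two bit strings. -/
def dotp {n : ℕ} (u x : Fin n → ZMod 2) : ZMod 2 := ∑ i, u i * x i

lemma negOnePow_add (b c : ZMod 2) : negOnePow (b + c) = negOnePow b * negOnePow c := by
  have h : ∀ b : ZMod 2, b = 0 ∨ b = 1 := by decide
  rcases h b with rfl | rfl <;> rcases h c with rfl | rfl <;> simp [negOnePow, show (1 : ZMod 2) + 1 = 0 from rfl]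

lemma abs_negOnePow (b : ZMod 2) : ‖negOnePow b‖ = 1 := by
  rcases (show b = 0 ∨ b = 1 by revert b; decide) with rfl | rfl <;> simp [negOnePow]

lemma dotp_add_right {n : ℕ} (u x a : Fin n → ZMod 2) :
    dotp u (x + a) = dotp u x + dotp u a := by
  simp [dotp, mul_add, Finset.sum_add_distrib]

/-- The outcome distribution of the measurement in Simon's algorithm: for a function `f`
satisfying the Simon promise with hidden string `a ≠ 0`, the measured string `u` is
uniformly distributed over the subspace `{u : ⟨u,a⟩ = 0}`. -/
theorem simon_measurement_distribution (n : ℕ) (hn : 1 ≤ n)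
    (a : Fin n → ZMod 2) (ha : a ≠ 0)
    (f : (Fin n → ZMod 2) → (Fin n → ZMod 2))
    (hf : ∀ x y, f x = f y ↔ (y = x ∨ y = x + a))
    (P : (Fin n → ZMod 2) → ℝ)
    (hP : ∀ u, P u = ∑ z : Fin n → ZMod 2,
      ‖((2 : ℂ) ^ n)⁻¹ *
        ∑ x, (if f x = z then negOnePow (dotp u x) else 0)‖ ^ 2) :
    ∀ u, (dotp u a = 0 → P u = (((2 : ℝ) ^ (n - 1))⁻¹)) ∧
         (dotp u a = 1 → P u = 0) := by
  intro u
  have hne : ∀ x₀ : Fin n → ZMod 2, x₀ ≠ x₀ + a := by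
    intro x₀ h
    exact ha (by simpa using h.symm)
  have hfiber : ∀ x₀, Finset.univ.filter (fun x => f x = f x₀) = {x₀, x₀ + a} := by
    intro x₀
    ext x
    simp only [Finset.mem_filter, Finset.mem_univ, true_and, Finset.mem_insert,
      Finset.mem_singleton]
    rw [eq_comm, hf x₀ x]
  have hS : ∀ x₀, (∑ x, (if f x = f x₀ then negOnePow (dotp u x) else 0))
      = negOnePow (dotp u x₀) * (1 + negOnePow (dotp u a)) := by
    intro x₀
    rw [← Finset.sum_filter, hfiber x₀, Finset.sum_pair (hne x₀), dotp_add_right,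
      negOnePow_add]
    ring
  -- fiber cardinality
  have hfibcard : ∀ x₀ : Fin n → ZMod 2,
      (Finset.univ.filter (fun x => f x = f x₀)).card = 2 := by
    intro x₀
    rw [hfiber x₀, Finset.card_pair (hne x₀)]
  have hcard : ((Finset.univ : Finset (Fin n → ZMod 2)).image f).card * 2 = 2 ^ n := by
    have h1 := Finset.card_eq_sum_card_fiberwise
      (f := f) (s := Finset.univ) (t := Finset.univ.image f)
      (fun x _ => Finset.mem_image_of_mem f (Finset.mem_univ x))
    have h2 : ∀ z ∈ Finset.univ.image f,
        (Finset.univ.filter (fun x => f x = z)).card = 2 := by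
      intro z hz
      obtain ⟨x₀, -, rfl⟩ := Finset.mem_image.mp hz
      exact hfibcard x₀
    rw [Finset.sum_congr rfl h2, Finset.sum_const, smul_eq_mul] at h1
    rw [← h1]
    simp [Finset.card_univ]
  constructor
  · intro h0
    obtain ⟨m, rfl⟩ : ∃ m, n = m + 1 := ⟨n - 1, (Nat.succ_pred_eq_of_pos hn).symm⟩
    have hS2 : ∀ x₀, (∑ x, (if f x = f x₀ then negOnePow (dotp u x) else 0))
        = 2 * negOnePow (dotp u x₀) := by
      intro x₀; rw [hS x₀, h0]; simp [negOnePow]; ring_nf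
    have hterm : ∀ z : Fin (m+1) → ZMod 2,
        ‖((2 : ℂ) ^ (m+1))⁻¹ *
          ∑ x, (if f x = z then negOnePow (dotp u x) else 0)‖ ^ 2
        = if z ∈ Finset.univ.image f then (((2:ℝ) ^ (m+1))⁻¹ * 2) ^ 2 else 0 := by
      intro z
      by_cases hz : z ∈ Finset.univ.image f
      · obtain ⟨x₀, -, rfl⟩ := Finset.mem_image.mp hz
        rw [hS2 x₀, if_pos hz]
        rw [norm_mul, norm_mul, abs_negOnePow, norm_inv, norm_pow]
        simp
      · rw [if_neg hz]
        have : (∑ x, (if f x = z then negOnePow (dotp u x) else 0)) = 0 := by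
          apply Finset.sum_eq_zero
          intro x _
          rw [if_neg]
          intro hfx
          exact hz (Finset.mem_image.mpr ⟨x, Finset.mem_univ x, hfx⟩)
        rw [this, mul_zero, norm_zero]
        norm_num
    rw [hP u, Finset.sum_congr rfl (fun z _ => hterm z), Finset.sum_ite_mem,
      Finset.univ_inter, Finset.sum_const, nsmul_eq_mul]
    have hc : ((Finset.univ.image f).card : ℝ) = 2 ^ m := by
      have : ((Finset.univ.image f).card : ℝ) * 2 = 2 ^ (m + 1) := by
        exact_mod_cast congrArg (Nat.cast : ℕ → ℝ) hcard
      rw [pow_succ] at this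
      have h2 : (2:ℝ) ≠ 0 := two_ne_zero
      field_simp at this
      linarith [this]
    rw [hc]
    simp only [Nat.add_sub_cancel]
    rw [pow_succ]
    field_simp
    ring
  · intro h1
    rw [hP u]
    apply Finset.sum_eq_zero
    intro z _
    have : (∑ x, (if f x = z then negOnePow (dotp u x) else 0)) = 0 := by
      by_cases hz : ∃ x₀, f x₀ = z
      · obtain ⟨x₀, rfl⟩ := hz
        rw [hS x₀, h1]
        simp [negOnePow]
      · apply Finset.sum_eq_zero
        intro x _
        rw [if_neg (fun hfx => hz ⟨x, hfx⟩)]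
    rw [this, mul_zero, norm_zero]
    norm_num
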